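/- For the n-gonal bipyramid BP_n with n = 2k and k odd, there are exactly two zigzags up to reversal, each of length 3n. -/

import Mathlib

open Finset
open scoped Classical

/-- A combinatorial triangulation: a finite collection of (triangular) faces,
each given as a finite set of vertices. -/
structure Triangulation (V : Type) where
  faces : Finset (Finset V)

namespace Triangulation

variable {V : Type} [DecidableEq V] (T : Triangulation V)

/-- The edges: the 2-element subsets of faces. -/
def edges : Finset (Finset V) := T.faces.biUnion fun f => f.powersetCard 2

/-- The vertices actually used by the triangulation. -/
def verts : Finset V := T.faces.sup id

/-- The combinatorial axioms of a triangulation of a closed surface: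
faces are triangles, every edge lies in exactly two faces, and two distinct
faces meet in at most an edge. -/
def IsProper : Prop :=
  (∀ f ∈ T.faces, f.card = 3) ∧
  (∀ e ∈ T.edges, (T.faces.filter fun f => e ⊆ f).card = 2) ∧
  (∀ f ∈ T.faces, ∀ g ∈ T.faces, f ≠ g → (f ∩ g).card ≤ 2)

/-- The underlying (simple) graph of the triangulation. -/
def graph : SimpleGraph V where
  Adj x y := x ≠ y ∧ ({x, y} : Finset V) ∈ T.edges
  symm := ⟨fun x y h => ⟨h.1.symm, by rw [Finset.pair_comm y x]; exact h.2⟩⟩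
  loopless := ⟨fun x h => h.1 rfl⟩

/-- A zigzag: a bi-infinite periodic sequence of edges `e i` together with the
face `f i` containing the consecutive edges `e i` and `e (i+1)`, such that
consecutive faces are distinct and edges two apart are disjoint.
`head i` is the (unique) common vertex of `e i` and `e (i+1)`; thus the `i`-th
traversal goes from `head (i-1)` to `head i`. -/
structure Zigzag where
  e : ℤ → Finset V
  f : ℤ → Finset V
  head : ℤ → V
  e_mem : ∀ i, e i ∈ T.edges
  f_mem : ∀ i, f i ∈ T.faces
  sub_left : ∀ i, e i ⊆ f i
  sub_right : ∀ i, e (i + 1) ⊆ f i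
  edges_ne : ∀ i, e i ≠ e (i + 1)
  faces_ne : ∀ i, f i ≠ f (i + 1)
  disj : ∀ i, Disjoint (e i) (e (i + 2))
  inter_eq : ∀ i, e i ∩ e (i + 1) = {head i}
  exists_period : ∃ n : ℕ, 0 < n ∧ ∀ i, e (i + n) = e i ∧ f (i + n) = f i ∧ head (i + n) = head i

namespace Zigzag

variable {T}

/-- The length of a zigzag: the minimal period of its edge sequence. -/
noncomputable def length (Z : Zigzag T) : ℕ :=
  sInf {n : ℕ | 0 < n ∧ ∀ i, Z.e (i + n) = Z.e i}

/-- How many times the edge `a` occurs in one (minimal) period of `Z`. -/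
noncomputable def mult (Z : Zigzag T) (a : Finset V) : ℕ :=
  ((Finset.range Z.length).filter fun i => Z.e (i : ℤ) = a).card

/-- The direction (tail, head) of the `i`-th traversal of `Z`. -/
def dir (Z : Zigzag T) (i : ℤ) : V × V := (Z.head (i - 1), Z.head i)

/-- Two zigzags are the same cyclic sequence up to rotation or rotation
combined with reversal. -/
def Equiv (Z W : Zigzag T) : Prop :=
  (∃ k : ℤ, ∀ i, W.e i = Z.e (i + k)) ∨ (∃ k : ℤ, ∀ i, W.e i = Z.e (k - i))

end Zigzag

/-- A triangulation is z-knotted if it has a single zigzag up to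
rotation and reversal. -/
def IsZKnotted : Prop := Nonempty (Zigzag T) ∧ ∀ Z W : Zigzag T, Z.Equiv W

/-- A z-orientation: a collection of pairwise non-equivalent zigzags which
double covers the edge set. -/
structure ZOrientation where
  zigzags : List (Zigzag T)
  cover : ∀ a ∈ T.edges, (zigzags.map fun Z => Z.mult a).sum = 2
  nonequiv : zigzags.Pairwise fun Z W => ¬ Z.Equiv W

namespace ZOrientation

variable {T}

/-- All traversals of the edge `a` by the distinguished zigzags go in the
direction `d`. -/
def dirOf (τ : ZOrientation T) (a : Finset V) (d : V × V) : Prop :=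
  ∀ Z ∈ τ.zigzags, ∀ i : ℤ, Z.e i = a → Z.dir i = d

/-- An edge of type II: both traversals go in the same direction. -/
def TypeII (τ : ZOrientation T) (a : Finset V) : Prop := ∃ d, τ.dirOf a d

/-- An edge of type I: the two traversals go in different directions. -/
def TypeI (τ : ZOrientation T) (a : Finset V) : Prop := ¬ τ.TypeII a

/-- A vertex of type I: it belongs only to edges of type I. -/
def VertexTypeI (τ : ZOrientation T) (x : V) : Prop :=
  ∀ a ∈ T.edges, x ∈ a → τ.TypeI a

/-- A vertex of type II: it belongs to some edge of type II. -/
def VertexTypeII (τ : ZOrientation T) (x : V) : Prop :=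
  ∃ a ∈ T.edges, x ∈ a ∧ τ.TypeII a

/-- A face of type I: exactly one of its edges is of type II
(the other two being of type I). -/
def FaceTypeI (τ : ZOrientation T) (f : Finset V) : Prop :=
  ∃! a : Finset V, a ∈ f.powersetCard 2 ∧ τ.TypeII a

/-- A face of type II: all its edges are of type II and their directions
form a directed cycle. -/
def FaceTypeII (τ : ZOrientation T) (f : Finset V) : Prop :=
  ∃ x y z : V, f = {x, y, z} ∧ x ≠ y ∧ y ≠ z ∧ x ≠ z ∧
    τ.dirOf {x, y} (x, y) ∧ τ.dirOf {y, z} (y, z) ∧ τ.dirOf {z, x} (z, x)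

/-- A homogeneous zigzag: it contains precisely two edges of type I after each
edge of type II, i.e. it is a cyclic sequence of blocks (II, I, I). -/
def Homogeneous (τ : ZOrientation T) (Z : Zigzag T) : Prop :=
  ∃ k : ℤ, ∀ i : ℤ, τ.TypeII (Z.e (k + 3 * i)) ∧
    τ.TypeI (Z.e (k + 3 * i + 1)) ∧ τ.TypeI (Z.e (k + 3 * i + 2))

/-- The in-degree of a vertex in the digraph of type II edges. -/
noncomputable def inDeg (τ : ZOrientation T) (x : V) : ℕ :=
  (T.edges.filter fun a => τ.TypeII a ∧ ∃ u, a = {u, x} ∧ τ.dirOf a (u, x)).card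

/-- The out-degree of a vertex in the digraph of type II edges. -/
noncomputable def outDeg (τ : ZOrientation T) (x : V) : ℕ :=
  (T.edges.filter fun a => τ.TypeII a ∧ ∃ u, a = {x, u} ∧ τ.dirOf a (x, u)).card

/-- A special pair: two type II edges with a common vertex which are
interleaved in the zigzag `Z` as a, b, a, b within one period. -/
def SpecialPair (τ : ZOrientation T) (Z : Zigzag T) (a b : Finset V) : Prop :=
  a ≠ b ∧ (a ∩ b).Nonempty ∧ τ.TypeII a ∧ τ.TypeII b ∧
  ∃ i₁ i₂ i₃ i₄ : ℤ, i₁ < i₂ ∧ i₂ < i₃ ∧ i₃ < i₄ ∧ i₄ < i₁ + (Z.length : ℤ) ∧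
    Z.e i₁ = a ∧ Z.e i₂ = b ∧ Z.e i₃ = a ∧ Z.e i₄ = b

/-- Two special pairs `c₁,c₂` and `t₁,t₂` are concordant: the zigzag
interleaves them in the cyclic pattern c₁,t₁,c₂,t₂,c₁,t₁,c₂,t₂. -/
def Concordant (τ : ZOrientation T) (Z : Zigzag T) (c₁ c₂ t₁ t₂ : Finset V) : Prop :=
  τ.SpecialPair Z c₁ c₂ ∧ τ.SpecialPair Z t₁ t₂ ∧
  (c₁ ≠ t₁ ∧ c₁ ≠ t₂ ∧ c₂ ≠ t₁ ∧ c₂ ≠ t₂) ∧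
  ∃ i₁ i₂ i₃ i₄ i₅ i₆ i₇ i₈ : ℤ,
    i₁ < i₂ ∧ i₂ < i₃ ∧ i₃ < i₄ ∧ i₄ < i₅ ∧ i₅ < i₆ ∧ i₆ < i₇ ∧ i₇ < i₈ ∧
    i₈ < i₁ + (Z.length : ℤ) ∧
    Z.e i₁ = c₁ ∧ Z.e i₂ = t₁ ∧ Z.e i₃ = c₂ ∧ Z.e i₄ = t₂ ∧
    Z.e i₅ = c₁ ∧ Z.e i₆ = t₁ ∧ Z.e i₇ = c₂ ∧ Z.e i₈ = t₂

end ZOrientation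

end Triangulation

/-- The `n`-gonal bipyramid: two apexes (the `Bool` vertices) joined to every
vertex of an `n`-cycle. -/
def BP (n : ℕ) [NeZero n] : Triangulation (Bool ⊕ ZMod n) where
  faces := Finset.univ.image fun p : Bool × ZMod n =>
    ({Sum.inl p.1, Sum.inr p.2, Sum.inr (p.2 + 1)} : Finset (Bool ⊕ ZMod n))

/-! ### Auxiliary development -/

set_option linter.unusedSectionVars false

namespace BPAux

variable (n : ℕ) [NeZero n]

/-- Apex vertex. -/
def vA (s : Bool) : Bool ⊕ ZMod n := Sum.inl s

/-- Ring vertex, indexed by an integer. -/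
def vR (m : ℤ) : Bool ⊕ ZMod n := Sum.inr (m : ZMod n)

/-- Face of the bipyramid. -/
def Fc (s : Bool) (m : ℤ) : Finset (Bool ⊕ ZMod n) := {vA n s, vR n m, vR n (m+1)}

variable {n}

lemma vR_eq_vR {a b : ℤ} : vR n a = vR n b ↔ (n:ℤ) ∣ b - a := by
  rw [vR, vR, Sum.inr.injEq, ZMod.intCast_eq_intCast_iff']
  exact ⟨Int.ModEq.dvd, fun h => Int.modEq_iff_dvd.mpr h⟩

lemma vR_congr {a b : ℤ} (h : (n:ℤ) ∣ b - a) : vR n a = vR n b := vR_eq_vR.mpr h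

lemma vA_ne_vR (s : Bool) (m : ℤ) : vA n s ≠ vR n m := by simp [vA, vR]

lemma vR_ne_vA (s : Bool) (m : ℤ) : vR n m ≠ vA n s := by simp [vA, vR]

lemma vA_eq_vA {s t : Bool} : vA n s = vA n t ↔ s = t := by simp [vA]

lemma vR_ne_vR (hn : 4 ≤ n) {a b : ℤ} (h1 : b - a ≠ 0) (h2 : -3 ≤ b - a)
    (h3 : b - a ≤ 3) : vR n a ≠ vR n b := by
  intro h
  have hd := vR_eq_vR.mp h
  have : b - a = 0 := by
    refine Int.eq_zero_of_abs_lt_dvd hd ?_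
    have : |b - a| ≤ 3 := abs_le.mpr ⟨h2, h3⟩
    have h4 : (4:ℤ) ≤ (n:ℤ) := by exact_mod_cast hn
    omega
  exact h1 this

lemma Fc_mem_faces (s : Bool) (m : ℤ) : Fc n s m ∈ (BP n).faces := by
  rw [BP, Fc]
  simp only [Finset.mem_image]
  refine ⟨(s, (m : ZMod n)), Finset.mem_univ _, ?_⟩
  simp [vA, vR]

lemma faces_eq (g : Finset (Bool ⊕ ZMod n)) (hg : g ∈ (BP n).faces) :
    ∃ s m, g = Fc n s m := by
  rw [BP] at hg
  simp only [Finset.mem_image] at hg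
  obtain ⟨⟨s, c⟩, -, rfl⟩ := hg
  refine ⟨s, (c.val : ℤ), ?_⟩
  have hc : ((c.val : ℤ) : ZMod n) = c := by push_cast [ZMod.natCast_val]; simp
  simp [Fc, vA, vR, hc]

lemma Fc_congr (s : Bool) {a b : ℤ} (h : (n:ℤ) ∣ b - a) : Fc n s a = Fc n s b := by
  rw [Fc, Fc, vR_congr h, vR_congr (a := a+1) (b := b+1) (by simpa using h)]

lemma ndvd (hn : 4 ≤ n) {d : ℤ} (h0 : d ≠ 0) (hl : -3 ≤ d) (hr : d ≤ 3) :
    ¬ (n:ℤ) ∣ d := by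
  intro h
  have h4 : (4:ℤ) ≤ (n:ℤ) := by exact_mod_cast hn
  have : d = 0 := Int.eq_zero_of_abs_lt_dvd h (by
    have : |d| ≤ 3 := abs_le.mpr ⟨hl, hr⟩
    omega)
  exact h0 this

lemma Fc_card (hn : 4 ≤ n) (s : Bool) (m : ℤ) : (Fc n s m).card = 3 := by
  have h1 : vA n s ∉ ({vR n m, vR n (m+1)} : Finset _) := by
    simp [vA_ne_vR]
  have h2 : vR n m ≠ vR n (m+1) := vR_ne_vR hn (by omega) (by omega) (by omega)
  rw [Fc, Finset.card_insert_of_notMem h1, Finset.card_pair h2]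

lemma ring_subset_Fc (s : Bool) (m : ℤ) :
    ({vR n m, vR n (m+1)} : Finset _) ⊆ Fc n s m := by
  rw [Fc]; intro x hx
  simp only [Finset.mem_insert, Finset.mem_singleton] at *
  tauto

lemma spoke_subset_Fc (s : Bool) (m : ℤ) :
    ({vA n s, vR n m} : Finset _) ⊆ Fc n s m := by
  rw [Fc]; intro x hx
  simp only [Finset.mem_insert, Finset.mem_singleton] at *
  tauto

lemma ring_mem_edges (hn : 4 ≤ n) (m : ℤ) :
    ({vR n m, vR n (m+1)} : Finset _) ∈ (BP n).edges := by
  rw [Triangulation.edges]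
  simp only [Finset.mem_biUnion]
  refine ⟨Fc n true m, Fc_mem_faces _ _, ?_⟩
  rw [Finset.mem_powersetCard]
  exact ⟨ring_subset_Fc _ _, Finset.card_pair (vR_ne_vR hn (by omega) (by omega) (by omega))⟩

lemma spoke_mem_edges (hn : 4 ≤ n) (s : Bool) (m : ℤ) :
    ({vA n s, vR n m} : Finset _) ∈ (BP n).edges := by
  rw [Triangulation.edges]
  simp only [Finset.mem_biUnion]
  refine ⟨Fc n s m, Fc_mem_faces _ _, ?_⟩
  rw [Finset.mem_powersetCard]
  exact ⟨spoke_subset_Fc _ _, Finset.card_pair (vA_ne_vR _ _)⟩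

lemma edge_card {e : Finset (Bool ⊕ ZMod n)} (he : e ∈ (BP n).edges) : e.card = 2 := by
  rw [Triangulation.edges] at he
  simp only [Finset.mem_biUnion] at he
  obtain ⟨g, -, he⟩ := he
  exact (Finset.mem_powersetCard.mp he).2

lemma two_subset_triple {α : Type*} [DecidableEq α] {e : Finset α} {x y z : α}
    (he : e ⊆ {x,y,z}) (hc : e.card = 2) : e = {x,y} ∨ e = {x,z} ∨ e = {y,z} := by
  obtain ⟨u, v, huv, rfl⟩ := Finset.card_eq_two.mp hc
  have hu : u ∈ ({x,y,z}:Finset α) := he (by simp)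
  have hv : v ∈ ({x,y,z}:Finset α) := he (by simp)
  simp only [Finset.mem_insert, Finset.mem_singleton] at hu hv
  rcases hu with rfl|rfl|rfl <;> rcases hv with rfl|rfl|rfl <;>
    first
      | exact absurd rfl huv
      | exact Or.inl rfl
      | exact Or.inl (Finset.pair_comm _ _)
      | exact Or.inr (Or.inl rfl)
      | exact Or.inr (Or.inl (Finset.pair_comm _ _))
      | exact Or.inr (Or.inr rfl)
      | exact Or.inr (Or.inr (Finset.pair_comm _ _))

lemma edges_eq {e : Finset (Bool ⊕ ZMod n)} (he : e ∈ (BP n).edges) :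
    (∃ s m, e = {vA n s, vR n m}) ∨ ∃ m, e = {vR n m, vR n (m+1)} := by
  rw [Triangulation.edges] at he
  simp only [Finset.mem_biUnion] at he
  obtain ⟨g, hg, he⟩ := he
  rw [Finset.mem_powersetCard] at he
  obtain ⟨s, m, rfl⟩ := faces_eq g hg
  rw [Fc] at he
  rcases two_subset_triple he.1 he.2 with h|h|h
  · exact Or.inl ⟨s, m, h⟩
  · exact Or.inl ⟨s, m+1, h⟩
  · exact Or.inr ⟨m, h⟩

lemma face_of_spoke (hn : 4 ≤ n) {g : Finset (Bool ⊕ ZMod n)} (hg : g ∈ (BP n).faces)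
    {s : Bool} {m : ℤ} (hsub : ({vA n s, vR n m} : Finset _) ⊆ g) :
    g = Fc n s (m-1) ∨ g = Fc n s m := by
  obtain ⟨s', m', rfl⟩ := faces_eq g hg
  have h1 : vA n s ∈ Fc n s' m' := hsub (by simp)
  have h2 : vR n m ∈ Fc n s' m' := hsub (by simp)
  rw [Fc] at h1 h2
  simp only [Finset.mem_insert, Finset.mem_singleton] at h1 h2
  have hs : s' = s := by
    rcases h1 with h|h|h
    · exact (vA_eq_vA.mp h).symm
    · exact absurd h (vA_ne_vR _ _)
    · exact absurd h (vA_ne_vR _ _)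
  subst hs
  rcases h2 with h|h|h
  · exact absurd h (vR_ne_vA _ _)
  · right
    exact (Fc_congr s' (vR_eq_vR.mp h)).symm
  · left
    have hd : (n:ℤ) ∣ (m-1) - m' := by
      have := vR_eq_vR.mp h
      have he : m - 1 - m' = -(m' + 1 - m) := by ring
      rw [he]
      exact dvd_neg.mpr this
    exact Fc_congr s' hd

lemma face_of_ring (hn : 4 ≤ n) {g : Finset (Bool ⊕ ZMod n)} (hg : g ∈ (BP n).faces)
    {m : ℤ} (hsub : ({vR n m, vR n (m+1)} : Finset _) ⊆ g) :
    g = Fc n true m ∨ g = Fc n false m := by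
  obtain ⟨s', m', rfl⟩ := faces_eq g hg
  have h2 : vR n m ∈ Fc n s' m' := hsub (by simp)
  have h3 : vR n (m+1) ∈ Fc n s' m' := hsub (by simp)
  rw [Fc] at h2 h3
  simp only [Finset.mem_insert, Finset.mem_singleton] at h2 h3
  rcases h2 with h|h|h
  · exact absurd h (vR_ne_vA _ _)
  · have hg : Fc n s' m' = Fc n s' m := (Fc_congr s' (vR_eq_vR.mp h)).symm
    cases s'
    · exact Or.inr hg
    · exact Or.inl hg
  · exfalso
    have hd1 : (n:ℤ) ∣ m' + 1 - m := vR_eq_vR.mp h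
    rcases h3 with h'|h'|h'
    · exact (vR_ne_vA _ _) h'
    · have hd2 : (n:ℤ) ∣ m' - (m+1) := vR_eq_vR.mp h'
      have : (n:ℤ) ∣ 2 := by
        have hh := dvd_sub hd1 hd2
        have e : m' + 1 - m - (m' - (m+1)) = 2 := by ring
        rwa [e] at hh
      exact ndvd hn (by omega) (by omega) (by omega) this
    · have hd2 : (n:ℤ) ∣ m' + 1 - (m+1) := vR_eq_vR.mp h'
      have : (n:ℤ) ∣ 1 := by
        have hh := dvd_sub hd1 hd2
        have e : m' + 1 - m - (m' + 1 - (m+1)) = 1 := by ring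
        rwa [e] at hh
      exact ndvd hn (by omega) (by omega) (by omega) this

lemma Fc_ne_pred (hn : 4 ≤ n) (s s' : Bool) (m : ℤ) : Fc n s (m-1) ≠ Fc n s' m := by
  intro h
  have : vR n (m+1) ∈ Fc n s (m-1) := by
    rw [h, Fc]; simp
  rw [Fc] at this
  simp only [Finset.mem_insert, Finset.mem_singleton] at this
  rcases this with h'|h'|h'
  · exact (vR_ne_vA _ _) h'
  · exact ndvd hn (by omega) (by omega) (by omega) (vR_eq_vR.mp h')
  · exact ndvd hn (by omega) (by omega) (by omega) (vR_eq_vR.mp h')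

lemma Fc_ne_apex (m m' : ℤ) : Fc n true m ≠ Fc n false m' := by
  intro h
  have : vA n true ∈ Fc n false m' := by
    rw [← h, Fc]; simp
  rw [Fc] at this
  simp only [Finset.mem_insert, Finset.mem_singleton] at this
  rcases this with h'|h'|h'
  · simp [vA] at h'
  · exact (vA_ne_vR _ _) h'
  · exact (vA_ne_vR _ _) h'

lemma spoke'_subset_Fc (s : Bool) (m : ℤ) :
    ({vA n s, vR n (m+1)} : Finset _) ⊆ Fc n s m := by
  rw [Fc]; intro x hx
  simp only [Finset.mem_insert, Finset.mem_singleton] at *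
  tauto

lemma Fc_ne_succ (hn : 4 ≤ n) (s s' : Bool) (m : ℤ) : Fc n s m ≠ Fc n s' (m+1) := by
  intro h
  have hm : vR n (m+1+1) ∈ Fc n s m := by
    rw [h, Fc]; simp
  rw [Fc] at hm
  simp only [Finset.mem_insert, Finset.mem_singleton] at hm
  rcases hm with h'|h'|h'
  · exact (vR_ne_vA _ _) h'
  · exact ndvd hn (by omega) (by omega) (by omega) (vR_eq_vR.mp h')
  · exact ndvd hn (by omega) (by omega) (by omega) (vR_eq_vR.mp h')

lemma vA_ne_not (s : Bool) : vA n s ≠ vA n (!s) := by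
  cases s <;> simp [vA]

lemma Fc_ne_not (hn : 4 ≤ n) (s : Bool) (m m' : ℤ) : Fc n s m ≠ Fc n (!s) m' := by
  cases s
  · exact fun h => Fc_ne_apex m' m h.symm
  · exact Fc_ne_apex m m'

/-- Apex parity function. -/
def ap (ε : Bool) (q : ℤ) : Bool := xor ε (decide (q % 2 = 1))

lemma ap_succ (ε : Bool) (q : ℤ) : ap ε (q+1) = !(ap ε q) := by
  rcases Int.emod_two_eq q with h|h
  · have h' : (q+1) % 2 = 1 := by omega
    simp [ap, h, h']
  · have h' : (q+1) % 2 = 0 := by omega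
    simp [ap, h, h']

lemma ap_add_even (ε : Bool) {q t : ℤ} (ht : 2 ∣ t) : ap ε (q+t) = ap ε q := by
  unfold ap
  congr 1
  exact decide_eq_decide.mpr (by omega)

variable (n)

/-- Edge sequence of the standard zigzag. -/
def zzE (δ : ℤ) (ε : Bool) (i : ℤ) : Finset (Bool ⊕ ZMod n) :=
  if i % 3 = 0 then {vR n (2*(i/3)+δ), vR n (2*(i/3)+δ+1)}
  else if i % 3 = 1 then {vA n (ap ε (i/3)), vR n (2*(i/3)+δ+1)}
  else {vA n (ap ε (i/3)), vR n (2*(i/3)+δ+2)}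

/-- Face sequence of the standard zigzag. -/
def zzF (δ : ℤ) (ε : Bool) (i : ℤ) : Finset (Bool ⊕ ZMod n) :=
  if i % 3 = 0 then Fc n (ap ε (i/3)) (2*(i/3)+δ)
  else if i % 3 = 1 then Fc n (ap ε (i/3)) (2*(i/3)+δ+1)
  else Fc n (ap ε (i/3)) (2*(i/3)+δ+2)

/-- Head sequence of the standard zigzag. -/
def zzH (δ : ℤ) (ε : Bool) (i : ℤ) : Bool ⊕ ZMod n :=
  if i % 3 = 0 then vR n (2*(i/3)+δ+1)
  else if i % 3 = 1 then vA n (ap ε (i/3))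
  else vR n (2*(i/3)+δ+2)

variable {n}

lemma zzE_0 (δ : ℤ) (ε : Bool) (q : ℤ) :
    zzE n δ ε (3*q) = {vR n (2*q+δ), vR n (2*q+δ+1)} := by
  have h1 : (3*q) % 3 = 0 := by omega
  have h2 : (3*q) / 3 = q := by omega
  simp [zzE, h1, h2]

lemma zzE_1 (δ : ℤ) (ε : Bool) (q : ℤ) :
    zzE n δ ε (3*q+1) = {vA n (ap ε q), vR n (2*q+δ+1)} := by
  have h1 : (3*q+1) % 3 = 1 := by omega
  have h2 : (3*q+1) / 3 = q := by omega
  simp [zzE, h1, h2]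

lemma zzE_2 (δ : ℤ) (ε : Bool) (q : ℤ) :
    zzE n δ ε (3*q+2) = {vA n (ap ε q), vR n (2*q+δ+2)} := by
  have h1 : (3*q+2) % 3 = 2 := by omega
  have h2 : (3*q+2) / 3 = q := by omega
  simp [zzE, h1, h2]

lemma zzF_0 (δ : ℤ) (ε : Bool) (q : ℤ) :
    zzF n δ ε (3*q) = Fc n (ap ε q) (2*q+δ) := by
  have h1 : (3*q) % 3 = 0 := by omega
  have h2 : (3*q) / 3 = q := by omega
  simp [zzF, h1, h2]

lemma zzF_1 (δ : ℤ) (ε : Bool) (q : ℤ) :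
    zzF n δ ε (3*q+1) = Fc n (ap ε q) (2*q+δ+1) := by
  have h1 : (3*q+1) % 3 = 1 := by omega
  have h2 : (3*q+1) / 3 = q := by omega
  simp [zzF, h1, h2]

lemma zzF_2 (δ : ℤ) (ε : Bool) (q : ℤ) :
    zzF n δ ε (3*q+2) = Fc n (ap ε q) (2*q+δ+2) := by
  have h1 : (3*q+2) % 3 = 2 := by omega
  have h2 : (3*q+2) / 3 = q := by omega
  simp [zzF, h1, h2]

lemma zzH_0 (δ : ℤ) (ε : Bool) (q : ℤ) :
    zzH n δ ε (3*q) = vR n (2*q+δ+1) := by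
  have h1 : (3*q) % 3 = 0 := by omega
  have h2 : (3*q) / 3 = q := by omega
  simp [zzH, h1, h2]

lemma zzH_1 (δ : ℤ) (ε : Bool) (q : ℤ) :
    zzH n δ ε (3*q+1) = vA n (ap ε q) := by
  have h1 : (3*q+1) % 3 = 1 := by omega
  have h2 : (3*q+1) / 3 = q := by omega
  simp [zzH, h1, h2]

lemma zzH_2 (δ : ℤ) (ε : Bool) (q : ℤ) :
    zzH n δ ε (3*q+2) = vR n (2*q+δ+2) := by
  have h1 : (3*q+2) % 3 = 2 := by omega
  have h2 : (3*q+2) / 3 = q := by omega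
  simp [zzH, h1, h2]

lemma pair_ne {α : Type*} [DecidableEq α] {a : α} {s t : Finset α}
    (h1 : a ∈ s) (h2 : a ∉ t) : s ≠ t := fun h => h2 (h ▸ h1)

lemma not_mem_pair {α : Type*} [DecidableEq α] {x a b : α} (h1 : x ≠ a) (h2 : x ≠ b) :
    x ∉ ({a,b}:Finset α) := by simp [h1, h2]

lemma pair_disjoint {α : Type*} [DecidableEq α] {a b c d : α}
    (h1 : a ≠ c) (h2 : a ≠ d) (h3 : b ≠ c) (h4 : b ≠ d) :
    Disjoint ({a,b}:Finset α) ({c,d}:Finset α) := by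
  rw [Finset.disjoint_left]
  intro x hx hx'
  simp only [Finset.mem_insert, Finset.mem_singleton] at hx hx'
  rcases hx with rfl|rfl <;> rcases hx' with rfl|rfl <;> simp_all

lemma pair_inter₁ {α : Type*} [DecidableEq α] {a b c : α} (h1 : a ≠ c) (h2 : a ≠ b) :
    ({a,b} : Finset α) ∩ ({c,b} : Finset α) = {b} := by
  ext x
  simp only [Finset.mem_inter, Finset.mem_insert, Finset.mem_singleton]
  constructor
  · rintro ⟨rfl|rfl, h|h⟩ <;> simp_all
  · rintro rfl
    exact ⟨Or.inr rfl, Or.inr rfl⟩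

lemma pair_inter₂ {α : Type*} [DecidableEq α] {a b c : α} (h1 : a ≠ b) (h2 : a ≠ c) :
    ({b,a} : Finset α) ∩ ({b,c} : Finset α) = {b} := by
  ext x
  simp only [Finset.mem_inter, Finset.mem_insert, Finset.mem_singleton]
  constructor
  · rintro ⟨rfl|rfl, h|h⟩ <;> simp_all
  · rintro rfl
    exact ⟨Or.inl rfl, Or.inl rfl⟩

lemma pair_inter₃ {α : Type*} [DecidableEq α] {a b c : α} (h1 : a ≠ b) (h2 : a ≠ c) :
    ({a,b} : Finset α) ∩ ({b,c} : Finset α) = {b} := by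
  ext x
  simp only [Finset.mem_inter, Finset.mem_insert, Finset.mem_singleton]
  constructor
  · rintro ⟨rfl|rfl, h|h⟩ <;> simp_all
  · rintro rfl
    exact ⟨Or.inr rfl, Or.inl rfl⟩

/-- The standard zigzag of the bipyramid. -/
def zz (hn : 4 ≤ n) (hev : 2 ∣ n) (δ : ℤ) (ε : Bool) : (BP n).Zigzag where
  e := zzE n δ ε
  f := zzF n δ ε
  head := zzH n δ ε
  e_mem := by
    intro i
    have h3 : i % 3 = 0 ∨ i % 3 = 1 ∨ i % 3 = 2 := by omega
    rcases h3 with h|h|h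
    · obtain ⟨q, rfl⟩ : ∃ q, i = 3*q := ⟨i/3, by omega⟩
      rw [zzE_0]; exact ring_mem_edges hn _
    · obtain ⟨q, rfl⟩ : ∃ q, i = 3*q+1 := ⟨i/3, by omega⟩
      rw [zzE_1]; exact spoke_mem_edges hn _ _
    · obtain ⟨q, rfl⟩ : ∃ q, i = 3*q+2 := ⟨i/3, by omega⟩
      rw [zzE_2]; exact spoke_mem_edges hn _ _
  f_mem := by
    intro i
    have h3 : i % 3 = 0 ∨ i % 3 = 1 ∨ i % 3 = 2 := by omega
    rcases h3 with h|h|h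
    · obtain ⟨q, rfl⟩ : ∃ q, i = 3*q := ⟨i/3, by omega⟩
      rw [zzF_0]; exact Fc_mem_faces _ _
    · obtain ⟨q, rfl⟩ : ∃ q, i = 3*q+1 := ⟨i/3, by omega⟩
      rw [zzF_1]; exact Fc_mem_faces _ _
    · obtain ⟨q, rfl⟩ : ∃ q, i = 3*q+2 := ⟨i/3, by omega⟩
      rw [zzF_2]; exact Fc_mem_faces _ _
  sub_left := by
    intro i
    have h3 : i % 3 = 0 ∨ i % 3 = 1 ∨ i % 3 = 2 := by omega
    rcases h3 with h|h|h
    · obtain ⟨q, rfl⟩ : ∃ q, i = 3*q := ⟨i/3, by omega⟩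
      rw [zzE_0, zzF_0]; exact ring_subset_Fc _ _
    · obtain ⟨q, rfl⟩ : ∃ q, i = 3*q+1 := ⟨i/3, by omega⟩
      rw [zzE_1, zzF_1]; exact spoke_subset_Fc _ _
    · obtain ⟨q, rfl⟩ : ∃ q, i = 3*q+2 := ⟨i/3, by omega⟩
      rw [zzE_2, zzF_2]; exact spoke_subset_Fc _ _
  sub_right := by
    intro i
    have h3 : i % 3 = 0 ∨ i % 3 = 1 ∨ i % 3 = 2 := by omega
    rcases h3 with h|h|h
    · obtain ⟨q, rfl⟩ : ∃ q, i = 3*q := ⟨i/3, by omega⟩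
      rw [show (3*q:ℤ)+1 = 3*q+1 from rfl, zzE_1, zzF_0]
      exact spoke'_subset_Fc _ _
    · obtain ⟨q, rfl⟩ : ∃ q, i = 3*q+1 := ⟨i/3, by omega⟩
      rw [show (3*q+1:ℤ)+1 = 3*q+2 by ring, zzE_2, zzF_1]
      rw [show (2*q+δ+2:ℤ) = (2*q+δ+1)+1 by ring]
      exact spoke'_subset_Fc _ _
    · obtain ⟨q, rfl⟩ : ∃ q, i = 3*q+2 := ⟨i/3, by omega⟩
      rw [show (3*q+2:ℤ)+1 = 3*(q+1) by ring, zzE_0, zzF_2]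
      rw [show (2*(q+1)+δ:ℤ) = 2*q+δ+2 by ring]
      exact ring_subset_Fc _ _
  edges_ne := by
    intro i
    have h3 : i % 3 = 0 ∨ i % 3 = 1 ∨ i % 3 = 2 := by omega
    rcases h3 with h|h|h
    · obtain ⟨q, rfl⟩ : ∃ q, i = 3*q := ⟨i/3, by omega⟩
      rw [show (3*q:ℤ)+1 = 3*q+1 from rfl, zzE_0, zzE_1]
      exact pair_ne (Finset.mem_insert_self _ _)
        (not_mem_pair (vR_ne_vA _ _) (vR_ne_vR hn (by omega) (by omega) (by omega)))
    · obtain ⟨q, rfl⟩ : ∃ q, i = 3*q+1 := ⟨i/3, by omega⟩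
      rw [show (3*q+1:ℤ)+1 = 3*q+2 by ring, zzE_1, zzE_2]
      refine pair_ne (a := vR n (2*q+δ+1)) (by simp) ?_
      exact not_mem_pair (vR_ne_vA _ _) (vR_ne_vR hn (by omega) (by omega) (by omega))
    · obtain ⟨q, rfl⟩ : ∃ q, i = 3*q+2 := ⟨i/3, by omega⟩
      rw [show (3*q+2:ℤ)+1 = 3*(q+1) by ring, zzE_2, zzE_0]
      exact pair_ne (Finset.mem_insert_self _ _)
        (not_mem_pair (vA_ne_vR _ _) (vA_ne_vR _ _))
  faces_ne := by
    intro i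
    have h3 : i % 3 = 0 ∨ i % 3 = 1 ∨ i % 3 = 2 := by omega
    rcases h3 with h|h|h
    · obtain ⟨q, rfl⟩ : ∃ q, i = 3*q := ⟨i/3, by omega⟩
      rw [show (3*q:ℤ)+1 = 3*q+1 from rfl, zzF_0, zzF_1]
      exact Fc_ne_succ hn _ _ _
    · obtain ⟨q, rfl⟩ : ∃ q, i = 3*q+1 := ⟨i/3, by omega⟩
      rw [show (3*q+1:ℤ)+1 = 3*q+2 by ring, zzF_1, zzF_2]
      rw [show (2*q+δ+2:ℤ) = (2*q+δ+1)+1 by ring]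
      exact Fc_ne_succ hn _ _ _
    · obtain ⟨q, rfl⟩ : ∃ q, i = 3*q+2 := ⟨i/3, by omega⟩
      rw [show (3*q+2:ℤ)+1 = 3*(q+1) by ring, zzF_2, zzF_0, ap_succ,
        show (2*(q+1)+δ:ℤ) = 2*q+δ+2 by ring]
      exact Fc_ne_not hn _ _ _
  disj := by
    intro i
    have h3 : i % 3 = 0 ∨ i % 3 = 1 ∨ i % 3 = 2 := by omega
    rcases h3 with h|h|h
    · obtain ⟨q, rfl⟩ : ∃ q, i = 3*q := ⟨i/3, by omega⟩
      rw [show (3*q:ℤ)+2 = 3*q+2 from rfl, zzE_0, zzE_2]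
      exact pair_disjoint (vR_ne_vA _ _) (vR_ne_vR hn (by omega) (by omega) (by omega))
        (vR_ne_vA _ _) (vR_ne_vR hn (by omega) (by omega) (by omega))
    · obtain ⟨q, rfl⟩ : ∃ q, i = 3*q+1 := ⟨i/3, by omega⟩
      rw [show (3*q+1:ℤ)+2 = 3*(q+1) by ring, zzE_1, zzE_0,
        show (2*(q+1)+δ:ℤ) = 2*q+δ+2 by ring]
      exact pair_disjoint (vA_ne_vR _ _) (vA_ne_vR _ _)
        (vR_ne_vR hn (by omega) (by omega) (by omega))
        (vR_ne_vR hn (by omega) (by omega) (by omega))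
    · obtain ⟨q, rfl⟩ : ∃ q, i = 3*q+2 := ⟨i/3, by omega⟩
      rw [show (3*q+2:ℤ)+2 = 3*(q+1)+1 by ring, zzE_2, zzE_1, ap_succ,
        show (2*(q+1)+δ+1:ℤ) = 2*q+δ+3 by ring]
      exact pair_disjoint (vA_ne_not _) (vA_ne_vR _ _) (vR_ne_vA _ _)
        (vR_ne_vR hn (by omega) (by omega) (by omega))
  inter_eq := by
    intro i
    have h3 : i % 3 = 0 ∨ i % 3 = 1 ∨ i % 3 = 2 := by omega
    rcases h3 with h|h|h
    · obtain ⟨q, rfl⟩ : ∃ q, i = 3*q := ⟨i/3, by omega⟩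
      rw [show (3*q:ℤ)+1 = 3*q+1 from rfl, zzE_0, zzE_1, zzH_0]
      exact pair_inter₁ (vR_ne_vA _ _) (vR_ne_vR hn (by omega) (by omega) (by omega))
    · obtain ⟨q, rfl⟩ : ∃ q, i = 3*q+1 := ⟨i/3, by omega⟩
      rw [show (3*q+1:ℤ)+1 = 3*q+2 by ring, zzE_1, zzE_2, zzH_1]
      exact pair_inter₂ (vR_ne_vA _ _) (vR_ne_vR hn (by omega) (by omega) (by omega))
    · obtain ⟨q, rfl⟩ : ∃ q, i = 3*q+2 := ⟨i/3, by omega⟩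
      rw [show (3*q+2:ℤ)+1 = 3*(q+1) by ring, zzE_2, zzE_0, zzH_2,
        show (2*(q+1)+δ:ℤ) = 2*q+δ+2 by ring]
      exact pair_inter₃ (vA_ne_vR _ _) (vA_ne_vR _ _)
  exists_period := by
    refine ⟨3*n, by positivity, ?_⟩
    intro i
    have hdvd : (n:ℤ) ∣ (2*n : ℤ) := ⟨2, by ring⟩
    have hev' : (2:ℤ) ∣ (n:ℤ) := by exact_mod_cast hev
    have h3 : i % 3 = 0 ∨ i % 3 = 1 ∨ i % 3 = 2 := by omega
    rcases h3 with h|h|h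
    · obtain ⟨q, rfl⟩ : ∃ q, i = 3*q := ⟨i/3, by omega⟩
      rw [show (3*q:ℤ) + ((3*n:ℕ):ℤ) = 3*(q+n) by push_cast; ring,
        zzE_0, zzE_0, zzF_0, zzF_0, zzH_0, zzH_0, ap_add_even _ hev',
        vR_congr (a := 2*(q+n)+δ) (b := 2*q+δ) (by push_cast; exact ⟨-2, by ring⟩),
        vR_congr (a := 2*(q+n)+δ+1) (b := 2*q+δ+1) (by push_cast; exact ⟨-2, by ring⟩),
        Fc_congr _ (a := 2*(q+n)+δ) (b := 2*q+δ) (by push_cast; exact ⟨-2, by ring⟩)]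
      exact ⟨rfl, rfl, rfl⟩
    · obtain ⟨q, rfl⟩ : ∃ q, i = 3*q+1 := ⟨i/3, by omega⟩
      rw [show (3*q+1:ℤ) + ((3*n:ℕ):ℤ) = 3*(q+n)+1 by push_cast; ring,
        zzE_1, zzE_1, zzF_1, zzF_1, zzH_1, zzH_1, ap_add_even _ hev',
        vR_congr (a := 2*(q+n)+δ+1) (b := 2*q+δ+1) (by push_cast; exact ⟨-2, by ring⟩),
        Fc_congr _ (a := 2*(q+n)+δ+1) (b := 2*q+δ+1) (by push_cast; exact ⟨-2, by ring⟩)]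
      exact ⟨rfl, rfl, rfl⟩
    · obtain ⟨q, rfl⟩ : ∃ q, i = 3*q+2 := ⟨i/3, by omega⟩
      rw [show (3*q+2:ℤ) + ((3*n:ℕ):ℤ) = 3*(q+n)+2 by push_cast; ring,
        zzE_2, zzE_2, zzF_2, zzF_2, zzH_2, zzH_2, ap_add_even _ hev',
        vR_congr (a := 2*(q+n)+δ+2) (b := 2*q+δ+2) (by push_cast; exact ⟨-2, by ring⟩),
        Fc_congr _ (a := 2*(q+n)+δ+2) (b := 2*q+δ+2) (by push_cast; exact ⟨-2, by ring⟩)]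
      exact ⟨rfl, rfl, rfl⟩

lemma zig_f_eq (hn : 4 ≤ n) (Z : (BP n).Zigzag) (i : ℤ) :
    Z.f i = Z.e i ∪ Z.e (i+1) := by
  have hsub : Z.e i ∪ Z.e (i+1) ⊆ Z.f i := Finset.union_subset (Z.sub_left i) (Z.sub_right i)
  have hc1 : (Z.e i).card = 2 := edge_card (Z.e_mem i)
  have hc2 : (Z.e (i+1)).card = 2 := edge_card (Z.e_mem (i+1))
  have hcf : (Z.f i).card = 3 := by
    obtain ⟨s, m, h⟩ := faces_eq _ (Z.f_mem i)
    rw [h]; exact Fc_card hn s m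
  have hci : (Z.e i ∩ Z.e (i+1)).card = 1 := by rw [Z.inter_eq i]; simp
  have hcu : (Z.e i ∪ Z.e (i+1)).card = 3 := by
    have := Finset.card_union_add_card_inter (Z.e i) (Z.e (i+1))
    omega
  exact (Finset.eq_of_subset_of_card_le hsub (by omega)).symm

lemma zig_e_formula (hn : 4 ≤ n) (Z : (BP n).Zigzag) (i : ℤ) :
    Z.e (i+2) = (Z.e (i+1) \ Z.e i) ∪ (Z.f (i+1) \ Z.e (i+1)) := by
  have ha : Z.e (i+1) ∩ Z.e (i+2) = {Z.head (i+1)} := by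
    have := Z.inter_eq (i+1)
    rwa [show (i:ℤ)+1+1 = i+2 by ring] at this
  have hh : Z.head (i+1) ∈ Z.e (i+1) ∩ Z.e (i+2) := ha ▸ Finset.mem_singleton_self _
  have hh1 : Z.head (i+1) ∈ Z.e (i+1) := (Finset.mem_inter.mp hh).1
  have hh2 : Z.head (i+1) ∈ Z.e (i+2) := (Finset.mem_inter.mp hh).2
  have hh3 : Z.head (i+1) ∉ Z.e i := fun hm =>
    (Finset.disjoint_left.mp (Z.disj i) hm) hh2
  have hc1 : (Z.e i).card = 2 := edge_card (Z.e_mem i)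
  have hc2 : (Z.e (i+1)).card = 2 := edge_card (Z.e_mem (i+1))
  have hc3 : (Z.e (i+2)).card = 2 := edge_card (Z.e_mem (i+2))
  have hcf : (Z.f (i+1)).card = 3 := by
    obtain ⟨s, m, h⟩ := faces_eq _ (Z.f_mem (i+1))
    rw [h]; exact Fc_card hn s m
  -- `Z.e (i+1) \ Z.e i = {Z.head (i+1)}`
  have hd1 : Z.e (i+1) \ Z.e i = {Z.head (i+1)} := by
    have hci : (Z.e (i+1) ∩ Z.e i).card = 1 := by
      rw [Finset.inter_comm, Z.inter_eq i]; simp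
    have hcd : (Z.e (i+1) \ Z.e i).card = 1 := by
      have := Finset.card_sdiff_add_card_inter (Z.e (i+1)) (Z.e i)
      omega
    have hsub : {Z.head (i+1)} ⊆ Z.e (i+1) \ Z.e i := by
      intro x hx
      rw [Finset.mem_singleton] at hx
      subst hx
      exact Finset.mem_sdiff.mpr ⟨hh1, hh3⟩
    exact (Finset.eq_of_subset_of_card_le hsub
      (by rw [Finset.card_singleton]; omega)).symm
  -- `Z.e (i+2) ∩ Z.e (i+1) = {Z.head (i+1)}`
  have h1 : Z.e (i+2) ∩ Z.e (i+1) = Z.e (i+1) \ Z.e i := by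
    rw [Finset.inter_comm, ha, hd1]
  -- `Z.e (i+2) \ Z.e (i+1) = Z.f (i+1) \ Z.e (i+1)`
  have h2 : Z.e (i+2) \ Z.e (i+1) = Z.f (i+1) \ Z.e (i+1) := by
    have hsub : Z.e (i+2) \ Z.e (i+1) ⊆ Z.f (i+1) \ Z.e (i+1) := by
      refine Finset.sdiff_subset_sdiff ?_ le_rfl
      have := Z.sub_right (i+1)
      rwa [show (i:ℤ)+1+1 = i+2 by ring] at this
    have hcd : (Z.e (i+2) \ Z.e (i+1)).card = 1 := by
      have h := Finset.card_sdiff_add_card_inter (Z.e (i+2)) (Z.e (i+1))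
      rw [h1, hd1] at h
      simp at h
      omega
    have hcd2 : (Z.f (i+1) \ Z.e (i+1)).card = 1 := by
      rw [Finset.card_sdiff_of_subset (Z.sub_left (i+1))]
      omega
    exact Finset.eq_of_subset_of_card_le hsub (by omega)
  calc Z.e (i+2) = Z.e (i+2) ∩ Z.e (i+1) ∪ Z.e (i+2) \ Z.e (i+1) :=
        (sup_inf_sdiff _ _).symm
    _ = (Z.e (i+1) \ Z.e i) ∪ (Z.f (i+1) \ Z.e (i+1)) := by rw [h1, h2]

lemma zig_step (hn : 4 ≤ n) (Z W : (BP n).Zigzag) (a b : ℤ)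
    (h0 : Z.e a = W.e b) (h1 : Z.e (a+1) = W.e (b+1)) : Z.e (a+2) = W.e (b+2) := by
  have hf0 : Z.f a = W.f b := by rw [zig_f_eq hn, zig_f_eq hn, h0, h1]
  have hZ1f : Z.e (a+1) ⊆ Z.f (a+1) := Z.sub_left (a+1)
  have hZ0f : Z.e (a+1) ⊆ Z.f a := Z.sub_right a
  have hW1f : Z.e (a+1) ⊆ W.f (b+1) := h1 ▸ W.sub_left (b+1)
  have hne1 : Z.f (a+1) ≠ Z.f a := (Z.faces_ne a).symm
  have hne2 : W.f (b+1) ≠ Z.f a := by rw [hf0]; exact (W.faces_ne b).symm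
  have hf1 : Z.f (a+1) = W.f (b+1) := by
    rcases edges_eq (Z.e_mem (a+1)) with ⟨s, m, hsm⟩ | ⟨m, hm⟩
    · rw [hsm] at hZ1f hZ0f hW1f
      have hA := face_of_spoke hn (Z.f_mem (a+1)) hZ1f
      have hB := face_of_spoke hn (Z.f_mem a) hZ0f
      have hC := face_of_spoke hn (W.f_mem (b+1)) hW1f
      have hne := Fc_ne_pred hn s s m
      rcases hA with h|h <;> rcases hB with h'|h' <;> rcases hC with h''|h'' <;> simp_all
    · rw [hm] at hZ1f hZ0f hW1f
      have hA := face_of_ring hn (Z.f_mem (a+1)) hZ1f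
      have hB := face_of_ring hn (Z.f_mem a) hZ0f
      have hC := face_of_ring hn (W.f_mem (b+1)) hW1f
      have hne := Fc_ne_apex (n := n) m m
      rcases hA with h|h <;> rcases hB with h'|h' <;> rcases hC with h''|h'' <;> simp_all
  rw [zig_e_formula hn Z a, zig_e_formula hn W b, h0, h1, hf1]

/-- Reversal of a zigzag. -/
def zrev (Z : (BP n).Zigzag) : (BP n).Zigzag where
  e i := Z.e (-i)
  f i := Z.f (-(i+1))
  head i := Z.head (-(i+1))
  e_mem i := Z.e_mem _
  f_mem i := Z.f_mem _
  sub_left i := by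
    have := Z.sub_right (-(i+1))
    rwa [show -(i+1)+1 = -i by ring] at this
  sub_right i := Z.sub_left _
  edges_ne i := by
    have h2 := Z.edges_ne (-(i+1))
    rw [show -(i+1)+1 = -i by ring] at h2
    exact fun h => h2 h.symm
  faces_ne i := by
    have h2 := Z.faces_ne (-(i+1+1))
    rw [show -(i+1+1)+1 = -(i+1) by ring] at h2
    exact fun h => h2 h.symm
  disj i := by
    have h2 := Z.disj (-(i+2))
    rw [show -(i+2)+2 = -i by ring] at h2
    exact h2.symm
  inter_eq i := by
    have h2 := Z.inter_eq (-(i+1))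
    rw [show -(i+1)+1 = -i by ring] at h2
    rw [Finset.inter_comm]
    exact h2
  exists_period := by
    obtain ⟨p, hp, h⟩ := Z.exists_period
    refine ⟨p, hp, fun i => ?_⟩
    refine ⟨?_, ?_, ?_⟩
    · have := (h (-(i+p))).1
      rw [show -(i+(p:ℤ))+p = -i by ring] at this
      exact this.symm
    · have := (h (-(i+p+1))).2.1
      rw [show -(i+(p:ℤ)+1)+p = -(i+1) by ring] at this
      exact this.symm
    · have := (h (-(i+p+1))).2.2
      rw [show -(i+(p:ℤ)+1)+p = -(i+1) by ring] at this
      exact this.symm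

lemma zrev_e (Z : (BP n).Zigzag) (i : ℤ) : (zrev Z).e i = Z.e (-i) := rfl

lemma zig_step_back (hn : 4 ≤ n) (Z W : (BP n).Zigzag) (a b : ℤ)
    (h0 : Z.e (a+1) = W.e (b+1)) (h1 : Z.e (a+2) = W.e (b+2)) : Z.e a = W.e b := by
  have key := zig_step hn (zrev Z) (zrev W) (-(a+2)) (-(b+2)) ?_ ?_
  · rw [zrev_e, zrev_e, show -(-(a+2)+2) = a by ring, show -(-(b+2)+2) = b by ring] at key
    exact key
  · rw [zrev_e, zrev_e, show -(-(a+2)) = a+2 by ring, show -(-(b+2)) = b+2 by ring]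
    exact h1
  · rw [zrev_e, zrev_e, show -(-(a+2)+1) = a+1 by ring, show -(-(b+2)+1) = b+1 by ring]
    exact h0

lemma zig_det (hn : 4 ≤ n) (Z W : (BP n).Zigzag) (a c : ℤ)
    (h0 : W.e a = Z.e (a+c)) (h1 : W.e (a+1) = Z.e (a+c+1)) : ∀ i, W.e i = Z.e (i+c) := by
  have key : ∀ j : ℤ, W.e (a+j) = Z.e (a+j+c) ∧ W.e (a+j+1) = Z.e (a+j+c+1) := by
    intro j
    induction j using Int.induction_on with
    | zero => simpa using ⟨h0, h1⟩
    | succ j ih =>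
      constructor
      · rw [show a+((j:ℤ)+1) = a+j+1 by ring]
        rw [show a+(j:ℤ)+1+c = a+j+c+1 by ring]
        exact ih.2
      · have := zig_step hn W Z (a+j) (a+j+c) ih.1 ih.2
        rw [show a+(j:ℤ)+2 = a+(j+1)+1 by ring, show a+(j:ℤ)+c+2 = a+(j+1)+c+1 by ring] at this
        exact this
    | pred j ih =>
      constructor
      · refine zig_step_back hn W Z (a+(-(j:ℤ)-1)) (a+(-(j:ℤ)-1)+c) ?_ ?_
        · rw [show a+(-(j:ℤ)-1)+1 = a+(-j) by ring, show a+(-(j:ℤ)-1)+c+1 = a+(-j)+c by ring]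
          exact ih.1
        · rw [show a+(-(j:ℤ)-1)+2 = a+(-j)+1 by ring, show a+(-(j:ℤ)-1)+c+2 = a+(-j)+c+1 by ring]
          exact ih.2
      · rw [show a+(-(j:ℤ)-1)+1 = a+(-j) by ring, show a+(-(j:ℤ)-1)+c+1 = a+(-j)+c by ring]
        exact ih.1
  intro i
  have := (key (i - a)).1
  rwa [show a+(i-a) = i by ring] at this

lemma ap_zero (ε : Bool) : ap ε 0 = ε := by simp [ap]

lemma ap_add (ε : Bool) (q t : ℤ) : ap ε (q+t) = ap (ap ε t) q := by
  rcases Int.emod_two_eq q with h|h <;> rcases Int.emod_two_eq t with h'|h'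
  · have h'' : (q+t)%2 = 0 := by omega
    simp [ap, h, h', h'']
  · have h'' : (q+t)%2 = 1 := by omega
    simp [ap, h, h', h'']
  · have h'' : (q+t)%2 = 1 := by omega
    simp [ap, h, h', h'']
  · have h'' : (q+t)%2 = 0 := by omega
    simp [ap, h, h', h'']

lemma zzE_at0 (δ : ℤ) (ε : Bool) : zzE n δ ε 0 = {vR n δ, vR n (δ+1)} := by
  have h := zzE_0 (n := n) δ ε 0
  rw [show (3*(0:ℤ)) = 0 by ring] at h
  rw [h, show (2*(0:ℤ)+δ) = δ by ring]

lemma zzE_at1 (δ : ℤ) (ε : Bool) : zzE n δ ε 1 = {vA n ε, vR n (δ+1)} := by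
  have h := zzE_1 (n := n) δ ε 0
  rw [show (3*(0:ℤ)+1) = 1 by ring] at h
  rw [h, show (2*(0:ℤ)+δ+1) = δ+1 by ring, ap_zero]

lemma zzE_at2 (δ : ℤ) (ε : Bool) : zzE n δ ε 2 = {vA n ε, vR n (δ+2)} := by
  have h := zzE_2 (n := n) δ ε 0
  rw [show (3*(0:ℤ)+2) = 2 by ring] at h
  rw [h, show (2*(0:ℤ)+δ+2) = δ+2 by ring, ap_zero]

lemma zzE_at3 (δ : ℤ) (ε : Bool) : zzE n δ ε 3 = {vR n (δ+2), vR n (δ+3)} := by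
  have h := zzE_0 (n := n) δ ε 1
  rw [show (3*(1:ℤ)) = 3 by ring] at h
  rw [h, show (2*(1:ℤ)+δ) = δ+2 by ring, show (δ+2)+1 = δ+3 by ring]

lemma zzE_congr {δ δ' : ℤ} (ε : Bool) (h : (n:ℤ) ∣ δ' - δ) (i : ℤ) :
    zzE n δ ε i = zzE n δ' ε i := by
  have h3 : i % 3 = 0 ∨ i % 3 = 1 ∨ i % 3 = 2 := by omega
  rcases h3 with hh|hh|hh
  · obtain ⟨q, rfl⟩ : ∃ q, i = 3*q := ⟨i/3, by omega⟩
    rw [zzE_0, zzE_0, vR_congr (a := 2*q+δ) (b := 2*q+δ') (by simpa using h),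
      vR_congr (a := 2*q+δ+1) (b := 2*q+δ'+1) (by simpa using h)]
  · obtain ⟨q, rfl⟩ : ∃ q, i = 3*q+1 := ⟨i/3, by omega⟩
    rw [zzE_1, zzE_1, vR_congr (a := 2*q+δ+1) (b := 2*q+δ'+1) (by simpa using h)]
  · obtain ⟨q, rfl⟩ : ∃ q, i = 3*q+2 := ⟨i/3, by omega⟩
    rw [zzE_2, zzE_2, vR_congr (a := 2*q+δ+2) (b := 2*q+δ'+2) (by simpa using h)]

lemma zz_shift (δ : ℤ) (ε : Bool) (t i : ℤ) :
    zzE n δ ε (i + 3*t) = zzE n (δ + 2*t) (ap ε t) i := by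
  have h3 : i % 3 = 0 ∨ i % 3 = 1 ∨ i % 3 = 2 := by omega
  rcases h3 with hh|hh|hh
  · obtain ⟨q, rfl⟩ : ∃ q, i = 3*q := ⟨i/3, by omega⟩
    rw [show 3*q+3*t = 3*(q+t) by ring, zzE_0, zzE_0,
      show 2*(q+t)+δ = 2*q+(δ+2*t) by ring]
  · obtain ⟨q, rfl⟩ : ∃ q, i = 3*q+1 := ⟨i/3, by omega⟩
    rw [show 3*q+1+3*t = 3*(q+t)+1 by ring, zzE_1, zzE_1, ap_add,
      show 2*(q+t)+δ+1 = 2*q+(δ+2*t)+1 by ring]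
  · obtain ⟨q, rfl⟩ : ∃ q, i = 3*q+2 := ⟨i/3, by omega⟩
    rw [show 3*q+2+3*t = 3*(q+t)+2 by ring, zzE_2, zzE_2, ap_add,
      show 2*(q+t)+δ+2 = 2*q+(δ+2*t)+2 by ring]

lemma zz_canon {k : ℕ} (hnk : n = 2*k) (hkodd : k % 2 = 1) (δ : ℤ) (ε : Bool) :
    ∃ t : ℤ, ∀ i, zzE n δ ε i = zzE n (δ % 2) true (i + 3*t) := by
  set p : ℤ := if ε then 0 else 1 with hp
  set t₀ : ℤ := δ / 2 with ht₀
  refine ⟨if t₀ % 2 = p then t₀ else t₀ + k, fun i => ?_⟩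
  set t : ℤ := if t₀ % 2 = p then t₀ else t₀ + k with ht
  have hkz : ((k:ℤ)) % 2 = 1 := by omega
  have hpv : p = 0 ∨ p = 1 := by
    rcases ε <;> simp [hp]
  have ht2 : t % 2 = p := by
    by_cases hc : t₀ % 2 = p
    · rw [ht, if_pos hc]; exact hc
    · rw [ht, if_neg hc]; omega
  have hdvd : (n:ℤ) ∣ (δ % 2 + 2*t) - δ := by
    by_cases hc : t₀ % 2 = p
    · rw [ht, if_pos hc]
      exact ⟨0, by omega⟩
    · rw [ht, if_neg hc]
      refine ⟨1, ?_⟩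
      have : (n:ℤ) = 2*k := by exact_mod_cast hnk
      omega
  have hap : ap true t = ε := by
    rcases hε : ε
    · have : t % 2 = 1 := by rw [ht2, hp, hε]; simp
      simp [ap, this]
    · have : t % 2 = 0 := by rw [ht2, hp, hε]; simp
      simp [ap, this]
  rw [zz_shift, hap, zzE_congr ε hdvd i]

lemma ap_even {ε : Bool} {t : ℤ} (h : ap ε t = ε) : t % 2 = 0 := by
  rcases Int.emod_two_eq t with h'|h'
  · exact h'
  · exfalso
    rw [ap, h'] at h
    rcases ε <;> simp at h

lemma zzE_min_period {k : ℕ} (hnk : n = 2*k) (hk2 : 2 ≤ k) (hkodd : k % 2 = 1)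
    (δ : ℤ) (ε : Bool) {m : ℕ} (hm : 0 < m)
    (h : ∀ i, zzE n δ ε (i + m) = zzE n δ ε i) : 3*n ≤ m := by
  have hn4 : 4 ≤ n := by omega
  have h0 := h 0
  rw [zero_add, zzE_at0] at h0
  have h3 : (m:ℤ) % 3 = 0 := by
    by_contra hcon
    · have hmem : vA n (ap ε ((m:ℤ)/3)) ∈ ({vR n δ, vR n (δ+1)} : Finset _) := by
        rw [← h0]
        have h3c : (m:ℤ) % 3 = 1 ∨ (m:ℤ) % 3 = 2 := by omega
        rcases h3c with hc|hc
        · obtain ⟨q, hq⟩ : ∃ q, (m:ℤ) = 3*q+1 := ⟨(m:ℤ)/3, by omega⟩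
          rw [hq, zzE_1]
          rw [show (3*q+1)/3 = q by omega]; simp
        · obtain ⟨q, hq⟩ : ∃ q, (m:ℤ) = 3*q+2 := ⟨(m:ℤ)/3, by omega⟩
          rw [hq, zzE_2]
          rw [show (3*q+2)/3 = q by omega]; simp
      simp only [Finset.mem_insert, Finset.mem_singleton] at hmem
      rcases hmem with hc|hc
      · exact vA_ne_vR _ _ hc
      · exact vA_ne_vR _ _ hc
  obtain ⟨t, ht⟩ : ∃ t, (m:ℤ) = 3*t := ⟨(m:ℤ)/3, by omega⟩
  have htpos : 0 < t := by omega
  have h1 := h 1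
  rw [show (1:ℤ) + m = 3*t+1 by omega, zzE_1, zzE_at1] at h1
  -- apex component
  have hA : vA n (ap ε t) ∈ ({vA n ε, vR n (δ+1)} : Finset _) := by
    rw [← h1]; simp
  simp only [Finset.mem_insert, Finset.mem_singleton] at hA
  have hap : ap ε t = ε := by
    rcases hA with hc|hc
    · exact vA_eq_vA.mp hc
    · exact absurd hc (vA_ne_vR _ _)
  have ht2 : t % 2 = 0 := ap_even hap
  -- ring component
  have hR : vR n (2*t+δ+1) ∈ ({vA n ε, vR n (δ+1)} : Finset _) := by
    rw [← h1]; simp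
  simp only [Finset.mem_insert, Finset.mem_singleton] at hR
  have hdvd : (n:ℤ) ∣ 2*t := by
    rcases hR with hc|hc
    · exact absurd hc (vR_ne_vA _ _)
    · have := vR_eq_vR.mp hc
      have he : (δ+1) - (2*t+δ+1) = -(2*t) := by ring
      rw [he, dvd_neg] at this
      exact this
  obtain ⟨c, hc⟩ := hdvd
  have hkn : (n:ℤ) = 2*(k:ℤ) := by exact_mod_cast hnk
  have htkc : t = k * c := by
    have h2 : (2:ℤ) * t = 2 * ((k:ℤ) * c) := by rw [hc, hkn]; ring
    exact mul_left_cancel₀ two_ne_zero h2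
  have hceven : Even c := by
    have hte : Even t := Int.even_iff.mpr ht2
    rw [htkc] at hte
    rcases Int.even_mul.mp hte with hek|hec
    · exact absurd (Int.even_iff.mp hek) (by omega)
    · exact hec
  obtain ⟨c', rfl⟩ := hceven
  have hkpos : (0:ℤ) < k := by omega
  have htc : t = 2*((k:ℤ)*c') := by rw [htkc]; ring
  have hprod : (0:ℤ) < (k:ℤ)*c' := by linarith
  have hc'pos : (0:ℤ) < c' := by
    by_contra hcon
    push_neg at hcon
    have : (k:ℤ)*c' ≤ 0 := mul_nonpos_of_nonneg_of_nonpos hkpos.le hcon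
    linarith
  have hk_le : (k:ℤ) ≤ (k:ℤ)*c' := le_mul_of_one_le_right hkpos.le (by omega)
  have : (3*n : ℤ) ≤ (m:ℤ) := by
    rw [ht, hkn]
    linarith
  exact_mod_cast this

lemma zzE_per3n (hev : 2 ∣ n) (δ : ℤ) (ε : Bool) (i : ℤ) :
    zzE n δ ε (i + (3*n:ℕ)) = zzE n δ ε i := by
  have hdvd : (n:ℤ) ∣ (-(2*n) : ℤ) := ⟨-2, by ring⟩
  have hev' : (2:ℤ) ∣ (n:ℤ) := by exact_mod_cast hev
  have h3 : i % 3 = 0 ∨ i % 3 = 1 ∨ i % 3 = 2 := by omega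
  rcases h3 with h|h|h
  · obtain ⟨q, rfl⟩ : ∃ q, i = 3*q := ⟨i/3, by omega⟩
    rw [show (3*q:ℤ) + ((3*n:ℕ):ℤ) = 3*(q+n) by push_cast; ring,
      zzE_0, zzE_0,
      vR_congr (a := 2*(q+n)+δ) (b := 2*q+δ) (by push_cast; exact ⟨-2, by ring⟩),
      vR_congr (a := 2*(q+n)+δ+1) (b := 2*q+δ+1) (by push_cast; exact ⟨-2, by ring⟩)]
  · obtain ⟨q, rfl⟩ : ∃ q, i = 3*q+1 := ⟨i/3, by omega⟩
    rw [show (3*q+1:ℤ) + ((3*n:ℕ):ℤ) = 3*(q+n)+1 by push_cast; ring,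
      zzE_1, zzE_1, ap_add_even _ hev',
      vR_congr (a := 2*(q+n)+δ+1) (b := 2*q+δ+1) (by push_cast; exact ⟨-2, by ring⟩)]
  · obtain ⟨q, rfl⟩ : ∃ q, i = 3*q+2 := ⟨i/3, by omega⟩
    rw [show (3*q+2:ℤ) + ((3*n:ℕ):ℤ) = 3*(q+n)+2 by push_cast; ring,
      zzE_2, zzE_2, ap_add_even _ hev',
      vR_congr (a := 2*(q+n)+δ+2) (b := 2*q+δ+2) (by push_cast; exact ⟨-2, by ring⟩)]

lemma zz_length (hn : 4 ≤ n) (hev : 2 ∣ n) {k : ℕ} (hnk : n = 2*k) (hk2 : 2 ≤ k)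
    (hkodd : k % 2 = 1) (δ : ℤ) (ε : Bool) : (zz hn hev δ ε).length = 3*n := by
  have hmem : 3*n ∈ {m : ℕ | 0 < m ∧ ∀ i, (zz hn hev δ ε).e (i + m) = (zz hn hev δ ε).e i} :=
    ⟨by omega, fun i => zzE_per3n hev δ ε i⟩
  refine le_antisymm (Nat.sInf_le hmem) (le_csInf ⟨3*n, hmem⟩ ?_)
  rintro m ⟨hm0, hm⟩
  exact zzE_min_period hnk hk2 hkodd δ ε hm0 hm

lemma length_shift (Z W : (BP n).Zigzag) (c : ℤ) (h : ∀ i, W.e i = Z.e (i+c)) :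
    W.length = Z.length := by
  unfold Triangulation.Zigzag.length
  congr 1
  ext m
  simp only [Set.mem_setOf_eq]
  constructor
  · rintro ⟨hm0, hm⟩
    refine ⟨hm0, fun j => ?_⟩
    have hh := hm (j - c)
    rw [h (j-c+m), h (j-c)] at hh
    rwa [show j-c+(m:ℤ)+c = j+m by ring, show j-c+c = j by ring] at hh
  · rintro ⟨hm0, hm⟩
    refine ⟨hm0, fun j => ?_⟩
    rw [h (j+m), h j, show j+(m:ℤ)+c = (j+c)+m by ring]
    exact hm (j+c)

lemma length_reflect (Z W : (BP n).Zigzag) (c : ℤ) (h : ∀ i, W.e i = Z.e (c-i)) :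
    W.length = Z.length := by
  unfold Triangulation.Zigzag.length
  congr 1
  ext m
  simp only [Set.mem_setOf_eq]
  constructor
  · rintro ⟨hm0, hm⟩
    refine ⟨hm0, fun j => ?_⟩
    have hh := hm (c - j - m)
    rw [h (c-j-m+m), h (c-j-m)] at hh
    rw [show c-(c-j-(m:ℤ)+m) = j by ring, show c-(c-j-(m:ℤ)) = j+m by ring] at hh
    exact hh.symm
  · rintro ⟨hm0, hm⟩
    refine ⟨hm0, fun j => ?_⟩
    rw [h (j+m), h j, show c-(j+(m:ℤ)) = c-j-m by ring]
    have hh := hm (c-j-m)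
    rw [show c-j-(m:ℤ)+m = c-j by ring] at hh
    exact hh.symm

lemma finish_fwd {k : ℕ} (hnk : n = 2*k) (hkodd : k % 2 = 1) (δ c : ℤ) (s : Bool)
    (W : (BP n).Zigzag) (h : ∀ i, W.e i = zzE n δ s (i+c)) :
    ∃ δ₀ : ℤ, (δ₀ = 0 ∨ δ₀ = 1) ∧
      ((∃ c', ∀ i, W.e i = zzE n δ₀ true (i + c')) ∨
       (∃ c', ∀ i, W.e i = zzE n δ₀ true (c' - i))) := by
  obtain ⟨t, ht⟩ := zz_canon hnk hkodd δ s
  refine ⟨δ % 2, by omega, Or.inl ⟨c + 3*t, fun i => ?_⟩⟩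
  rw [h i, ht (i+c), show i+c+3*t = i+(c+3*t) by ring]

lemma finish_rev {k : ℕ} (hnk : n = 2*k) (hkodd : k % 2 = 1) (δ c : ℤ) (s : Bool)
    (W : (BP n).Zigzag) (h : ∀ i, W.e i = zzE n δ s (c-i)) :
    ∃ δ₀ : ℤ, (δ₀ = 0 ∨ δ₀ = 1) ∧
      ((∃ c', ∀ i, W.e i = zzE n δ₀ true (i + c')) ∨
       (∃ c', ∀ i, W.e i = zzE n δ₀ true (c' - i))) := by
  obtain ⟨t, ht⟩ := zz_canon hnk hkodd δ s
  refine ⟨δ % 2, by omega, Or.inr ⟨c + 3*t, fun i => ?_⟩⟩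
  rw [h i, ht (c-i), show c-i+3*t = (c+3*t)-i by ring]

lemma main_equiv (hn : 4 ≤ n) (hev : 2 ∣ n) {k : ℕ} (hnk : n = 2*k) (hkodd : k % 2 = 1)
    (W : (BP n).Zigzag) :
    ∃ δ₀ : ℤ, (δ₀ = 0 ∨ δ₀ = 1) ∧
      ((∃ c', ∀ i, W.e i = zzE n δ₀ true (i + c')) ∨
       (∃ c', ∀ i, W.e i = zzE n δ₀ true (c' - i))) := by
  obtain ⟨s, m, hsm⟩ := faces_eq _ (W.f_mem 0)
  have h0sub : W.e 0 ⊆ Fc n s m := hsm ▸ W.sub_left 0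
  have h1sub : W.e 1 ⊆ Fc n s m := by
    have hh := W.sub_right 0
    rw [show (0:ℤ)+1 = 1 by ring] at hh
    exact hsm ▸ hh
  rw [Fc] at h0sub h1sub
  have hne01 : W.e 0 ≠ W.e 1 := by
    have hh := W.edges_ne 0
    rwa [show (0:ℤ)+1 = 1 by ring] at hh
  -- evaluations of the model zigzags
  have hY0 : ∀ δ ε, (zz hn hev δ ε).e 0 = ({vR n δ, vR n (δ+1)} : Finset _) := fun δ ε => zzE_at0 δ ε
  have hY1 : ∀ δ ε, (zz hn hev δ ε).e 1 = ({vA n ε, vR n (δ+1)} : Finset _) := fun δ ε => zzE_at1 δ ε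
  have hY2 : ∀ δ ε, (zz hn hev δ ε).e 2 = ({vA n ε, vR n (δ+2)} : Finset _) := fun δ ε => zzE_at2 δ ε
  have hY3 : ∀ δ ε, (zz hn hev δ ε).e 3 = ({vR n (δ+2), vR n (δ+3)} : Finset _) := fun δ ε => zzE_at3 δ ε
  rcases two_subset_triple h0sub (edge_card (W.e_mem 0)) with h0|h0|h0 <;>
    rcases two_subset_triple h1sub (edge_card (W.e_mem 1)) with h1|h1|h1
  · -- (B, B): impossible
    exact absurd (h0.trans h1.symm) hne01
  · -- (B, C): forward, `zz (m-1) s` at 1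
    have hdet := zig_det hn (zz hn hev (m-1) s) W 0 1 ?_ ?_
    · exact finish_fwd hnk hkodd (m-1) 1 s W hdet
    · rw [show (0:ℤ)+1 = 1 by ring, hY1, h0, show m-1+1 = m by ring]
    · rw [show (0:ℤ)+1 = 1 by ring, show (1:ℤ)+1 = 2 by ring, hY2, h1,
        show m-1+2 = m+1 by ring]
  · -- (B, A): forward, `zz (m-2) s` at 2
    have hdet := zig_det hn (zz hn hev (m-2) s) W 0 2 ?_ ?_
    · exact finish_fwd hnk hkodd (m-2) 2 s W hdet
    · rw [show (0:ℤ)+2 = 2 by ring, hY2, h0, show m-2+2 = m by ring]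
    · rw [show (0:ℤ)+1 = 1 by ring, show (0:ℤ)+2+1 = 3 by ring, hY3, h1,
        show m-2+2 = m by ring, show m-2+3 = m+1 by ring]
  · -- (C, B): reverse, `zz (m-1) s`, matching at -2
    have hdet := zig_det hn (zrev (zz hn hev (m-1) s)) W 0 (-2) ?_ ?_
    · refine finish_rev hnk hkodd (m-1) 2 s W (fun i => ?_)
      rw [hdet i]
      exact congrArg (zzE n (m-1) s) (by ring)
    · rw [show (0:ℤ)+(-2) = -2 by ring, zrev_e, show -(-2:ℤ) = 2 by norm_num, hY2, h0,
        show m-1+2 = m+1 by ring]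
    · rw [show (0:ℤ)+1 = 1 by ring, show (0:ℤ)+(-2)+1 = -1 by ring, zrev_e,
        show -(-1:ℤ) = 1 by norm_num, hY1, h1, show m-1+1 = m by ring]
  · -- (C, C): impossible
    exact absurd (h0.trans h1.symm) hne01
  · -- (C, A): reverse, `zz m s`, matching at -1
    have hdet := zig_det hn (zrev (zz hn hev m s)) W 0 (-1) ?_ ?_
    · refine finish_rev hnk hkodd m 1 s W (fun i => ?_)
      rw [hdet i]
      exact congrArg (zzE n m s) (by ring)
    · rw [show (0:ℤ)+(-1) = -1 by ring, zrev_e, show -(-1:ℤ) = 1 by norm_num, hY1, h0]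
    · rw [show (0:ℤ)+1 = 1 by ring, show (0:ℤ)+(-1)+1 = 0 by ring, zrev_e,
        show -(0:ℤ) = 0 by norm_num, hY0, h1]
  · -- (A, B): reverse, `zz (m-2) s`, matching at -3
    have hdet := zig_det hn (zrev (zz hn hev (m-2) s)) W 0 (-3) ?_ ?_
    · refine finish_rev hnk hkodd (m-2) 3 s W (fun i => ?_)
      rw [hdet i]
      exact congrArg (zzE n (m-2) s) (by ring)
    · rw [show (0:ℤ)+(-3) = -3 by ring, zrev_e, show -(-3:ℤ) = 3 by norm_num, hY3, h0,
        show m-2+2 = m by ring, show m-2+3 = m+1 by ring]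
    · rw [show (0:ℤ)+1 = 1 by ring, show (0:ℤ)+(-3)+1 = -2 by ring, zrev_e,
        show -(-2:ℤ) = 2 by norm_num, hY2, h1, show m-2+2 = m by ring]
  · -- (A, C): forward, `zz m s` at 0
    have hdet := zig_det hn (zz hn hev m s) W 0 0 ?_ ?_
    · exact finish_fwd hnk hkodd m 0 s W hdet
    · rw [show (0:ℤ)+0 = 0 by ring, hY0, h0]
    · rw [show (0:ℤ)+1 = 1 by ring, show (0:ℤ)+0+1 = 1 by ring, hY1, h1]
  · -- (A, A): impossible
    exact absurd (h0.trans h1.symm) hne01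

lemma zzE_ne_start (hn : 4 ≤ n) (hev : 2 ∣ n) (j : ℤ) :
    zzE n 0 true j ≠ zzE n 1 true 0 := by
  intro h
  rw [zzE_at0] at h
  have hev' : (2:ℤ) ∣ (n:ℤ) := by exact_mod_cast hev
  have h3 : j % 3 = 0 ∨ j % 3 = 1 ∨ j % 3 = 2 := by omega
  rcases h3 with hh|hh|hh
  · obtain ⟨q, rfl⟩ : ∃ q, j = 3*q := ⟨j/3, by omega⟩
    rw [zzE_0] at h
    have hm1 : vR n 1 ∈ ({vR n (2*q+0), vR n (2*q+0+1)} : Finset _) := by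
      rw [h]; simp
    have hm2 : vR n (1+1) ∈ ({vR n (2*q+0), vR n (2*q+0+1)} : Finset _) := by
      rw [h]; simp
    simp only [Finset.mem_insert, Finset.mem_singleton] at hm1 hm2
    have hd1 : (n:ℤ) ∣ 2*q := by
      rcases hm1 with hc|hc
      · exfalso
        have hd := vR_eq_vR.mp hc
        have h2 := dvd_trans hev' hd
        omega
      · have hd := vR_eq_vR.mp hc
        have he : 2*q+0+1-1 = 2*q := by ring
        rwa [he] at hd
    rcases hm2 with hc|hc
    · have hd2 := vR_eq_vR.mp hc
      have he : 2*q+0-(1+1) = 2*q-2 := by ring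
      rw [he] at hd2
      have hfin := dvd_sub hd1 hd2
      have he2 : 2*q - (2*q-2) = 2 := by ring
      rw [he2] at hfin
      exact ndvd hn (by omega) (by omega) (by omega) hfin
    · have hd2 := vR_eq_vR.mp hc
      have h2 := dvd_trans hev' hd2
      omega
  · obtain ⟨q, rfl⟩ : ∃ q, j = 3*q+1 := ⟨j/3, by omega⟩
    rw [zzE_1] at h
    have hm : vA n (ap true q) ∈ ({vR n 1, vR n (1+1)} : Finset _) := by
      rw [← h]; simp
    simp only [Finset.mem_insert, Finset.mem_singleton] at hm
    rcases hm with hc|hc <;> exact vA_ne_vR _ _ hc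
  · obtain ⟨q, rfl⟩ : ∃ q, j = 3*q+2 := ⟨j/3, by omega⟩
    rw [zzE_2] at h
    have hm : vA n (ap true q) ∈ ({vR n 1, vR n (1+1)} : Finset _) := by
      rw [← h]; simp
    simp only [Finset.mem_insert, Finset.mem_singleton] at hm
    rcases hm with hc|hc <;> exact vA_ne_vR _ _ hc

lemma not_equiv (hn : 4 ≤ n) (hev : 2 ∣ n) :
    ¬ (zz hn hev 0 true).Equiv (zz hn hev 1 true) := by
  intro h
  rcases h with ⟨c, hc⟩ | ⟨c, hc⟩
  · exact zzE_ne_start hn hev (0+c) (hc 0).symm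
  · exact zzE_ne_start hn hev (c-0) (hc 0).symm

end BPAux

/-- For the `n`-gonal bipyramid `BP n` with `n = 2k` and `k` odd,
there are exactly two zigzags up to reversal, each of length `3n`. -/
theorem stmt4 (n k : ℕ) [NeZero n] (hnk : n = 2 * k) (hk : Odd k) (h2 : 2 ≤ k) :
    (∃ Z₁ Z₂ : (BP n).Zigzag, ¬ Z₁.Equiv Z₂ ∧
      ∀ W : (BP n).Zigzag, Z₁.Equiv W ∨ Z₂.Equiv W) ∧
    ∀ W : (BP n).Zigzag, W.length = 3 * n := by
  have hn4 : 4 ≤ n := by omega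
  have hev : 2 ∣ n := ⟨k, hnk⟩
  have hkodd : k % 2 = 1 := Nat.odd_iff.mp hk
  constructor
  · refine ⟨BPAux.zz hn4 hev 0 true, BPAux.zz hn4 hev 1 true,
      BPAux.not_equiv hn4 hev, ?_⟩
    intro W
    obtain ⟨δ₀, hδ, hcase⟩ := BPAux.main_equiv hn4 hev hnk hkodd W
    rcases hδ with rfl|rfl
    · left
      rcases hcase with ⟨c, hc⟩|⟨c, hc⟩
      · exact Or.inl ⟨c, hc⟩
      · exact Or.inr ⟨c, hc⟩
    · right
      rcases hcase with ⟨c, hc⟩|⟨c, hc⟩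
      · exact Or.inl ⟨c, hc⟩
      · exact Or.inr ⟨c, hc⟩
  · intro W
    obtain ⟨δ₀, hδ, hcase⟩ := BPAux.main_equiv hn4 hev hnk hkodd W
    have hzl : (BPAux.zz hn4 hev δ₀ true).length = 3*n :=
      BPAux.zz_length hn4 hev hnk h2 hkodd δ₀ true
    rcases hcase with ⟨c, hc⟩|⟨c, hc⟩
    · rw [← hzl]
      exact BPAux.length_shift (BPAux.zz hn4 hev δ₀ true) W c hc
    · rw [← hzl]
      exact BPAux.length_reflect (BPAux.zz hn4 hev δ₀ true) W c hc
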